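/- Let k ≥ 2 and let t = 2^{2k} − 2^k + 1 be the Kasami–Welch number. Then the multiplicity of φ_t(x,y) ∈ F_2[x,y] at the point p = (1,1) equals 2^k − 2, and the lowest-degree nonzero homogeneous component of φ_t(x+1, y+1) (the tangent cone at p) is a product of 2^k − 2 pairwise non-proportional linear forms over an algebraic closure of F_2. -/

import Mathlib

open MvPolynomial

namespace KasamiAux

open Finset

abbrev R2 := MvPolynomial (Fin 2) (ZMod 2)

/-- all monomials of `P` have degree ≥ n -/
def Ord (n : ℕ) (P : R2) : Prop := ∀ d ∈ P.support, n ≤ d.degree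

lemma ord_zero (n : ℕ) : Ord n (0 : R2) := by intro d hd; simp at hd

lemma ord_mono {n m : ℕ} {P : R2} (h : Ord n P) (hmn : m ≤ n) : Ord m P :=
  fun d hd => le_trans hmn (h d hd)

lemma deg_add (a b : Fin 2 →₀ ℕ) : (a + b).degree = a.degree + b.degree := by
  simp [Finsupp.degree_eq_weight_one, map_add]

lemma ord_add {n : ℕ} {P Q : R2} (hP : Ord n P) (hQ : Ord n Q) : Ord n (P + Q) := by
  intro d hd
  rcases Finset.mem_union.1 (MvPolynomial.support_add hd) with h | h
  · exact hP d h
  · exact hQ d h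

lemma ord_mul {n m : ℕ} {P Q : R2} (hP : Ord n P) (hQ : Ord m Q) : Ord (n + m) (P * Q) := by
  intro d hd
  have := MvPolynomial.support_mul P Q hd
  rcases Finset.mem_add.1 this with ⟨a, ha, b, hb, rfl⟩
  rw [deg_add]
  exact add_le_add (hP a ha) (hQ b hb)

lemma ord_any (P : R2) : Ord 0 P := fun d _ => Nat.zero_le _

lemma ord_pow {n : ℕ} {P : R2} (hP : Ord n P) (j : ℕ) : Ord (n * j) (P ^ j) := by
  induction j with
  | zero =>
      simp only [Nat.mul_zero, pow_zero]
      exact ord_any 1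
  | succ j ih =>
      have h2 := ord_mul ih hP
      have h3 : n * (j + 1) = n * j + n := by ring
      rw [h3, pow_succ]
      exact h2

lemma ord_X_pow (i : Fin 2) (m : ℕ) : Ord m ((X i : R2) ^ m) := by
  have : ((X i : R2) ^ m) = monomial (Finsupp.single i m) 1 := by
    simp [MvPolynomial.X_pow_eq_monomial]
  rw [this]
  intro d hd
  have hd' := MvPolynomial.support_monomial_subset hd
  simp only [Finset.mem_singleton] at hd'
  subst hd'
  classical
  rcases Nat.eq_zero_or_pos m with rfl | hm
  · exact Nat.zero_le _
  · calc m = Finsupp.single i m i := by simp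
      _ ≤ (Finsupp.single i m).degree := Finsupp.le_degree i _

lemma ord_sum {n : ℕ} {s : Finset ℕ} {f : ℕ → R2} (h : ∀ j ∈ s, Ord n (f j)) :
    Ord n (∑ j ∈ s, f j) := by
  classical
  induction s using Finset.induction_on with
  | empty => simpa using ord_zero n
  | insert _ _ hx ih =>
      rw [Finset.sum_insert hx]
      exact ord_add (h _ (Finset.mem_insert_self _ _)) (ih fun j hj => h j (Finset.mem_insert_of_mem hj))

lemma ord_hc_zero {n : ℕ} {P : R2} (h : Ord n P) {i : ℕ} (hi : i < n) :
    homogeneousComponent i P = 0 := by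
  apply homogeneousComponent_eq_zero'
  intro d hd
  exact Nat.ne_of_gt (lt_of_lt_of_le hi (h d hd))

end KasamiAux

namespace KasamiAux
open Finset

example : CharP R2 2 := inferInstance
example : Fact (Nat.Prime 2) := inferInstance
example : IsDomain R2 := inferInstance

lemma geom_pow (k : ℕ) (v : R2) (hv : constantCoeff v = 0) :
    (1 + v) ^ (2 ^ k - 1) = ∑ j ∈ Finset.range (2 ^ k), v ^ j := by
  have hvne : v - 1 ≠ 0 := by
    intro h
    apply_fun constantCoeff at h
    simp [hv] at h
  apply mul_right_cancel₀ hvne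
  rw [geom_sum_mul]
  have hs : v - 1 = 1 + v := by rw [CharTwo.sub_eq_add]; ring
  rw [hs, ← pow_succ, show 2^k - 1 + 1 = 2^k from Nat.succ_pred_eq_of_pos (Nat.pow_pos (n := k) (by norm_num : 0 < 2)),
    add_pow_char_pow, one_pow, CharTwo.sub_eq_add]
  ring

end KasamiAux

namespace KasamiAux
open Finset

lemma ccX0 : constantCoeff (X 0 : R2) = 0 := by simp
lemma h2 : (2 : R2) = 0 := CharTwo.two_eq_zero

lemma pow_t_expand (k t : ℕ) (ht : t = 2 ^ k * (2 ^ k - 1) + 1) (w : R2)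
    (hw : constantCoeff w = 0) :
    (1 + w) ^ t = (1 + w) * ∑ j ∈ Finset.range (2 ^ k), w ^ (2 ^ k * j) := by
  have hq : constantCoeff (w ^ 2 ^ k) = 0 := by
    rw [map_pow, hw, zero_pow (by positivity)]
  rw [ht, pow_add, pow_one, pow_mul, add_pow_char_pow, one_pow, geom_pow k _ hq, mul_comm]
  exact congrArg _ (Finset.sum_congr rfl fun j _ => (pow_mul w (2 ^ k) j).symm)

noncomputable def Fj (k j : ℕ) : R2 :=
  (1 + X 0) * X 0 ^ (2 ^ k * j) + (1 + X 1) * X 1 ^ (2 ^ k * j)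
    + (1 + (X 0 + X 1)) * (X 0 ^ (2 ^ k) + X 1 ^ (2 ^ k)) ^ j

end KasamiAux

namespace KasamiAux
open Finset

lemma expandN (k t : ℕ) (hk : 2 ≤ k) (ht : t = 2 ^ (2 * k) - 2 ^ k + 1) :
    (X 0 + 1 : R2) ^ t + (X 1 + 1) ^ t + 1 + (X 0 + X 1 + 1) ^ t
      = X 0 * X 1 ^ 2 ^ k + X 0 ^ 2 ^ k * X 1 + ∑ j ∈ Finset.Ico 2 (2 ^ k), Fj k j := by
  have hq4 : 4 ≤ 2 ^ k := by
    calc 4 = 2 ^ 2 := by norm_num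
    _ ≤ 2 ^ k := Nat.pow_le_pow_right (by norm_num) hk
  have ht' : t = 2 ^ k * (2 ^ k - 1) + 1 := by
    rw [ht, Nat.mul_sub, mul_one, two_mul, pow_add]
  have e0 : (X 0 + 1 : R2) ^ t = (1 + X 0) * ∑ j ∈ Finset.range (2 ^ k), X 0 ^ (2 ^ k * j) := by
    rw [add_comm (X 0) 1]; exact pow_t_expand k t ht' _ (by simp)
  have e1 : (X 1 + 1 : R2) ^ t = (1 + X 1) * ∑ j ∈ Finset.range (2 ^ k), X 1 ^ (2 ^ k * j) := by
    rw [add_comm (X 1) 1]; exact pow_t_expand k t ht' _ (by simp)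
  have e2 : (X 0 + X 1 + 1 : R2) ^ t
      = (1 + (X 0 + X 1)) * ∑ j ∈ Finset.range (2 ^ k), (X 0 ^ 2 ^ k + X 1 ^ 2 ^ k) ^ j := by
    rw [add_comm (X 0 + X 1) 1]
    rw [pow_t_expand k t ht' _ (by simp)]
    congr 1
    refine Finset.sum_congr rfl fun j _ => ?_
    rw [pow_mul, add_pow_char_pow]
  rw [e0, e1, e2, Finset.mul_sum, Finset.mul_sum, Finset.mul_sum, ← Finset.sum_add_distrib,
    add_right_comm, ← Finset.sum_add_distrib]
  have hGF : ∀ j, (1 + X 0 : R2) * X 0 ^ (2 ^ k * j) + (1 + X 1) * X 1 ^ (2 ^ k * j)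
      + (1 + (X 0 + X 1)) * (X 0 ^ 2 ^ k + X 1 ^ 2 ^ k) ^ j = Fj k j := fun j => rfl
  have hsum : ∑ j ∈ Finset.range (2 ^ k),
      ((1 + X 0 : R2) * X 0 ^ (2 ^ k * j) + (1 + X 1) * X 1 ^ (2 ^ k * j)
        + (1 + (X 0 + X 1)) * (X 0 ^ 2 ^ k + X 1 ^ 2 ^ k) ^ j)
      = Fj k 0 + (Fj k 1 + ∑ j ∈ Finset.Ico 2 (2 ^ k), Fj k j) := by
    simp_rw [hGF]
    rw [Finset.range_eq_Ico, Finset.sum_eq_sum_Ico_succ_bot (by omega : 0 < 2 ^ k),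
      Finset.sum_eq_sum_Ico_succ_bot (by omega : 1 < 2 ^ k)]
  have hF0 : Fj k 0 = 1 := by
    show (1 + X 0 : R2) * X 0 ^ (2 ^ k * 0) + (1 + X 1) * X 1 ^ (2 ^ k * 0)
      + (1 + (X 0 + X 1)) * (X 0 ^ 2 ^ k + X 1 ^ 2 ^ k) ^ 0 = 1
    rw [Nat.mul_zero, pow_zero, pow_zero, pow_zero]
    linear_combination (X 0 + X 1 + 1 : R2) * h2
  have hF1 : Fj k 1 = X 0 * X 1 ^ 2 ^ k + X 0 ^ 2 ^ k * X 1 := by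
    show (1 + X 0 : R2) * X 0 ^ (2 ^ k * 1) + (1 + X 1) * X 1 ^ (2 ^ k * 1)
      + (1 + (X 0 + X 1)) * (X 0 ^ 2 ^ k + X 1 ^ 2 ^ k) ^ 1 = _
    rw [Nat.mul_one, pow_one]
    linear_combination (X 0 ^ 2 ^ k + X 1 ^ 2 ^ k + X 0 ^ 2 ^ k * X 0 + X 1 ^ 2 ^ k * X 1 : R2) * h2
  rw [hsum, hF0, hF1]
  linear_combination h2

end KasamiAux

namespace KasamiAux
open Finset

lemma ord_X (i : Fin 2) : Ord 1 (X i : R2) := by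
  have := ord_X_pow i 1
  rwa [pow_one] at this

noncomputable def Dv : R2 := (X 0 + X 1) * X 0 * X 1

lemma ord_Dv : Ord 3 Dv := by
  have h := ord_mul (ord_mul (ord_add (ord_X 0) (ord_X 1)) (ord_X 0)) (ord_X 1)
  norm_num at h
  exact h

lemma Dv_hom : Dv.IsHomogeneous 3 := by
  have h := (((isHomogeneous_X (ZMod 2) (0 : Fin 2)).add (isHomogeneous_X _ 1)).mul
    (isHomogeneous_X _ 0)).mul (isHomogeneous_X _ 1)
  norm_num at h
  exact h

lemma X_add_X_ne : (X 0 + X 1 : R2) ≠ 0 := by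
  intro h
  have := congrArg (coeff (Finsupp.single 0 1)) h
  simp [coeff_X', Finsupp.single_eq_single_iff] at this

lemma Dv_ne : Dv ≠ 0 :=
  mul_ne_zero (mul_ne_zero X_add_X_ne (X_ne_zero 0)) (X_ne_zero 1)

lemma ord_Fj (k : ℕ) {j : ℕ} (hj : 2 ≤ j) : Ord (2 * 2 ^ k) (Fj k j) := by
  have hb : 2 * 2 ^ k ≤ 2 ^ k * j := by
    calc 2 * 2 ^ k = 2 ^ k * 2 := by ring
    _ ≤ 2 ^ k * j := Nat.mul_le_mul_left _ hj
  refine ord_add (ord_add ?_ ?_) ?_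
  · have := ord_mul (ord_any (1 + X 0)) (ord_X_pow 0 (2 ^ k * j))
    rw [zero_add] at this
    exact ord_mono this hb
  · have := ord_mul (ord_any (1 + X 1)) (ord_X_pow 1 (2 ^ k * j))
    rw [zero_add] at this
    exact ord_mono this hb
  · have hin : Ord (2 ^ k) (X 0 ^ 2 ^ k + X 1 ^ 2 ^ k : R2) :=
      ord_add (ord_X_pow 0 _) (ord_X_pow 1 _)
    have := ord_mul (ord_any (1 + (X 0 + X 1))) (ord_pow hin j)
    rw [zero_add] at this
    exact ord_mono this hb

noncomputable def Tc (k : ℕ) : R2 := ∑ i ∈ Finset.range (2 ^ k - 1), X 0 ^ i * X 1 ^ (2 ^ k - 2 - i)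

lemma Tc_hom (k : ℕ) (hk : 2 ≤ k) : (Tc k).IsHomogeneous (2 ^ k - 2) := by
  have hq4 : 4 ≤ 2 ^ k := by
    calc 4 = 2 ^ 2 := by norm_num
    _ ≤ 2 ^ k := Nat.pow_le_pow_right (by norm_num) hk
  apply IsHomogeneous.sum
  intro i hi
  rw [Finset.mem_range] at hi
  have h := (isHomogeneous_X_pow (R := ZMod 2) (0 : Fin 2) i).mul (isHomogeneous_X_pow 1 (2 ^ k - 2 - i))
  rwa [show i + (2 ^ k - 2 - i) = 2 ^ k - 2 by omega] at h

lemma Tc_ne (k : ℕ) (hk : 2 ≤ k) : Tc k ≠ 0 := by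
  have hq4 : 4 ≤ 2 ^ k := by
    calc 4 = 2 ^ 2 := by norm_num
    _ ≤ 2 ^ k := Nat.pow_le_pow_right (by norm_num) hk
  intro h
  have := congrArg (eval (fun j : Fin 2 => if j = 0 then (0 : ZMod 2) else 1)) h
  rw [Tc] at this
  simp only [map_sum, eval_mul, eval_pow, eval_X, if_true, if_pos rfl, one_ne_zero,
    Fin.one_eq_zero_iff, OfNat.ofNat_ne_one, if_false, one_pow, mul_one, eval_zero] at this
  rw [map_zero] at this
  rw [Finset.sum_eq_single 0 (fun b _ hb => by rw [zero_pow hb]) (fun h0 => absurd (Finset.mem_range.2 (by omega)) h0)] at this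
  simp at this

lemma DvTc (k : ℕ) (hk : 2 ≤ k) : Dv * Tc k = X 0 * X 1 ^ 2 ^ k + X 0 ^ 2 ^ k * X 1 := by
  have hq4 : 4 ≤ 2 ^ k := by
    calc 4 = 2 ^ 2 := by norm_num
    _ ≤ 2 ^ k := Nat.pow_le_pow_right (by norm_num) hk
  have hg := geom_sum₂_mul (X 0 : R2) (X 1) (2 ^ k - 1)
  rw [CharTwo.sub_eq_add, CharTwo.sub_eq_add] at hg
  have hT : Tc k * (X 0 + X 1) = X 0 ^ (2 ^ k - 1) + X 1 ^ (2 ^ k - 1) := by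
    rw [Tc]
    simp_rw [show 2 ^ k - 1 - 1 = 2 ^ k - 2 from by omega] at hg
    exact hg
  have e0 : (X 0 : R2) ^ 2 ^ k = X 0 * X 0 ^ (2 ^ k - 1) := by
    rw [← pow_succ']
    congr 1
    omega
  have e1 : (X 1 : R2) ^ 2 ^ k = X 1 * X 1 ^ (2 ^ k - 1) := by
    rw [← pow_succ']
    congr 1
    omega
  calc Dv * Tc k = X 0 * X 1 * (Tc k * (X 0 + X 1)) := by rw [Dv]; ring
  _ = X 0 * X 1 * (X 0 ^ (2 ^ k - 1) + X 1 ^ (2 ^ k - 1)) := by rw [hT]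
  _ = X 0 * X 1 ^ 2 ^ k + X 0 ^ 2 ^ k * X 1 := by rw [e0, e1]; ring

end KasamiAux

namespace KasamiAux
open Finset

lemma shift_eq (t : ℕ) (phi : R2)
    (hphi : phi * ((X 0 + X 1) * (X 0 + 1) * (X 1 + 1)) =
      X 0 ^ t + X 1 ^ t + 1 + (X 0 + X 1 + 1) ^ t) :
    (aeval (fun i : Fin 2 => (X i + 1 : R2)) phi) * Dv
      = (X 0 + 1) ^ t + (X 1 + 1) ^ t + 1 + (X 0 + X 1 + 1) ^ t := by
  have h := congrArg (aeval (fun i : Fin 2 => (X i + 1 : R2))) hphi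
  simp only [map_mul, map_add, map_pow, map_one, aeval_X] at h
  have e1 : (X 0 + 1 + (X 1 + 1) + 1 : R2) = X 0 + X 1 + 1 := by linear_combination h2
  have e2 : ((X 0 + 1 + (X 1 + 1)) * (X 0 + 1 + 1) * (X 1 + 1 + 1) : R2) = Dv := by
    rw [Dv]
    linear_combination (3 * X 0 * X 1 + X 0 ^ 2 + X 1 ^ 2 + 4 * X 0 + 4 * X 1 + 4 : R2) * h2
  rw [e1, e2] at h
  exact h

lemma key_decomp (k t : ℕ) (hk : 2 ≤ k) (ht : t = 2 ^ (2 * k) - 2 ^ k + 1) (phi : R2)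
    (hphi : phi * ((X 0 + X 1) * (X 0 + 1) * (X 1 + 1)) =
      X 0 ^ t + X 1 ^ t + 1 + (X 0 + X 1 + 1) ^ t) :
    ∃ P : R2, (aeval (fun i : Fin 2 => (X i + 1 : R2)) phi) = Tc k + P ∧ Ord (2 ^ k - 1) P := by
  have hq4 : 4 ≤ 2 ^ k := by
    calc 4 = 2 ^ 2 := by norm_num
    _ ≤ 2 ^ k := Nat.pow_le_pow_right (by norm_num) hk
  set ψ := aeval (fun i : Fin 2 => (X i + 1 : R2)) phi with hψdef
  set RR := ∑ j ∈ Finset.Ico 2 (2 ^ k), Fj k j with hRRdef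
  have hOrdRR : Ord (2 * 2 ^ k) RR := ord_sum fun j hj => ord_Fj k (Finset.mem_Ico.1 hj).1
  have hpsi : ψ * Dv = Dv * Tc k + RR := by
    rw [shift_eq t phi hphi, expandN k t hk ht, DvTc k hk]
  have hrel : (ψ + Tc k) * Dv = RR := by
    linear_combination hpsi + (Dv * Tc k) * h2
  refine ⟨ψ + Tc k, by linear_combination (- Tc k) * h2, ?_⟩
  set P := ψ + Tc k with hPdef
  by_cases hP : P = 0
  · rw [hP]; exact ord_zero _
  · have hsne : P.support.Nonempty := support_nonempty.2 hP
    have hdne : (P.support.image Finsupp.degree).Nonempty := hsne.image _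
    set a := (P.support.image Finsupp.degree).min' hdne with hadef
    have hOrdP : Ord a P := fun d hd =>
      Finset.min'_le _ _ (Finset.mem_image_of_mem _ hd)
    obtain ⟨d0, hd0mem, hd0⟩ := Finset.mem_image.1 ((P.support.image Finsupp.degree).min'_mem hdne)
    set lowP := homogeneousComponent a P with hlowdef
    have hlowne : lowP ≠ 0 := by
      intro h
      have := congrArg (coeff d0) h
      rw [coeff_homogeneousComponent, if_pos hd0, coeff_zero] at this
      exact (mem_support_iff.1 hd0mem) this
    have hOrdP2 : Ord (a + 1) (P - lowP) := by
      intro d hd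
      have hcd : coeff d (P - lowP) ≠ 0 := mem_support_iff.1 hd
      rw [coeff_sub, coeff_homogeneousComponent] at hcd
      by_cases hda : d.degree = a
      · rw [if_pos hda] at hcd
        simp at hcd
      · rw [if_neg hda, sub_zero] at hcd
        have := hOrdP d (mem_support_iff.2 hcd)
        omega
    have hclow : homogeneousComponent (a + 3) (lowP * Dv) = lowP * Dv := by
      rw [homogeneousComponent_of_mem ((mem_homogeneousSubmodule _ _).2
        ((homogeneousComponent_isHomogeneous a P).mul Dv_hom))]
      rw [if_pos rfl]
    have hsplit : P * Dv = lowP * Dv + (P - lowP) * Dv := by ring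
    have hhigh : homogeneousComponent (a + 3) ((P - lowP) * Dv) = 0 :=
      ord_hc_zero (ord_mul hOrdP2 ord_Dv) (by omega)
    have hcRR : homogeneousComponent (a + 3) RR = lowP * Dv := by
      rw [← hrel, hsplit, map_add, hclow, hhigh, add_zero]
    have hne : homogeneousComponent (a + 3) RR ≠ 0 := by
      rw [hcRR]
      exact mul_ne_zero hlowne Dv_ne
    have hge : 2 * 2 ^ k ≤ a + 3 := by
      by_contra hlt
      exact hne (ord_hc_zero hOrdRR (by omega))
    exact ord_mono hOrdP (by omega)

end KasamiAux

namespace KasamiAux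
open Finset Polynomial

abbrev Fq := AlgebraicClosure (ZMod 2)

noncomputable local instance : DecidableEq Fq := Classical.decEq _

example : CharP Fq 2 := inferInstance
example : Infinite Fq := inferInstance
example : IsAlgClosed Fq := inferInstance

lemma prod_roots_eval (n : ℕ) (hn : n ≠ 0) (hnF : ((n : ℕ) : Fq) = 1) :
    ∀ u : Fq, ∏ ζ ∈ (Polynomial.X ^ n - 1 : Fq[X]).roots.toFinset, (u - ζ) = u ^ n - 1 := by
  intro u
  set g : Fq[X] := Polynomial.X ^ n - 1 with hg
  have hg' : g = Polynomial.X ^ n - Polynomial.C 1 := by rw [map_one]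
  have hmonic : g.Monic := by rw [hg']; exact monic_X_pow_sub_C _ hn
  have hsep : g.Separable := by
    rw [hg']
    exact separable_X_pow_sub_C 1 (by rw [hnF]; norm_num) one_ne_zero
  have hnodup := hsep.squarefree
  have hnd : g.roots.Nodup := nodup_roots hsep
  have hval : g.roots.toFinset.val = g.roots := by
    rw [Multiset.toFinset_val, Multiset.dedup_eq_self.2 hnd]
  have hprod : g = (g.roots.map fun r => Polynomial.X - Polynomial.C r).prod :=
    (IsAlgClosed.splits g).eq_prod_roots_of_monic hmonic
  calc ∏ ζ ∈ g.roots.toFinset, (u - ζ) = (g.roots.map fun ζ => u - ζ).prod := by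
        rw [Finset.prod_eq_multiset_prod, hval]
  _ = eval u ((g.roots.map fun r => Polynomial.X - Polynomial.C r).prod) := by
        rw [eval_multiset_prod, Multiset.map_map]
        congr 1
        ext ζ
        simp
  _ = eval u g := by rw [← hprod]
  _ = u ^ n - 1 := by simp [hg]

lemma prod_all_linear (n : ℕ) (hn : n ≠ 0) (hnF : ((n : ℕ) : Fq) = 1)
    (hcard : (Polynomial.X ^ n - 1 : Fq[X]).roots.toFinset.card = n) :
    ∏ ζ ∈ (Polynomial.X ^ n - 1 : Fq[X]).roots.toFinset,
        (MvPolynomial.X 0 + MvPolynomial.C ζ * MvPolynomial.X 1 : MvPolynomial (Fin 2) Fq)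
      = MvPolynomial.X 0 ^ n + MvPolynomial.X 1 ^ n := by
  apply MvPolynomial.funext
  intro v
  rw [MvPolynomial.eval_prod]
  simp only [MvPolynomial.eval_add, MvPolynomial.eval_mul, MvPolynomial.eval_pow,
    MvPolynomial.eval_X, MvPolynomial.eval_C]
  by_cases hv1 : v 1 = 0
  · rw [hv1]
    simp only [mul_zero, add_zero]
    rw [Finset.prod_const, hcard, zero_pow hn, add_zero]
  · have hstep : ∀ ζ ∈ (Polynomial.X ^ n - 1 : Fq[X]).roots.toFinset,
        v 0 + ζ * v 1 = v 1 * (v 0 * (v 1)⁻¹ - ζ) := by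
      intro ζ _
      rw [CharTwo.sub_eq_add]
      field_simp
    rw [Finset.prod_congr rfl hstep, Finset.prod_mul_distrib, Finset.prod_const, hcard,
      prod_roots_eval n hn hnF]
    rw [CharTwo.sub_eq_add, mul_pow, mul_add, mul_one]
    congr 1
    rw [mul_comm, mul_assoc, ← mul_pow, inv_mul_cancel₀ hv1, one_pow, mul_one]

end KasamiAux

namespace KasamiAux
open Finset Polynomial

noncomputable local instance : DecidableEq Fq := Classical.decEq _

lemma part2 (k : ℕ) (hk : 2 ≤ k) :
    ∃ a b : Fin (2 ^ k - 2) → Fq,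
      MvPolynomial.map (algebraMap (ZMod 2) Fq) (Tc k)
        = ∏ i, (MvPolynomial.C (a i) * MvPolynomial.X 0 + MvPolynomial.C (b i) * MvPolynomial.X 1) ∧
      ∀ i j, i ≠ j → a i * b j ≠ a j * b i := by
  have hq4 : 4 ≤ 2 ^ k := by
    calc 4 = 2 ^ 2 := by norm_num
    _ ≤ 2 ^ k := Nat.pow_le_pow_right (by norm_num) hk
  set n := 2 ^ k - 1 with hn
  have hnne : n ≠ 0 := by omega
  have hodd : n % 2 = 1 := by
    have h2k : 2 ^ k = 2 * 2 ^ (k - 1) := by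
      rw [← pow_succ']
      congr 1
      omega
    omega
  have hnF : ((n : ℕ) : Fq) = 1 := by
    obtain ⟨m, hm⟩ : ∃ m, n = 2 * m + 1 := ⟨n / 2, by omega⟩
    have h20 : (2 : Fq) = 0 := CharTwo.two_eq_zero
    rw [hm]
    push_cast
    linear_combination (m : Fq) * h20
  set g : Fq[X] := Polynomial.X ^ n - 1 with hg
  have hg' : g = Polynomial.X ^ n - Polynomial.C 1 := by rw [map_one]
  have hmonic : g.Monic := by rw [hg']; exact monic_X_pow_sub_C _ hnne
  have hsep : g.Separable := by
    rw [hg']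
    exact separable_X_pow_sub_C 1 (by rw [hnF]; norm_num) one_ne_zero
  have hnd : g.roots.Nodup := nodup_roots hsep
  have hcard : g.roots.toFinset.card = n := by
    rw [Multiset.toFinset_card_of_nodup hnd,
      splits_iff_card_roots.1 (IsAlgClosed.splits g), hg', natDegree_X_pow_sub_C]
  set Sall := g.roots.toFinset with hSall
  have h1mem : (1 : Fq) ∈ Sall := by
    rw [hSall, Multiset.mem_toFinset, mem_roots']
    refine ⟨hmonic.ne_zero, ?_⟩
    simp [hg, IsRoot]
  set S := Sall.erase 1 with hS
  have hScard : S.card = 2 ^ k - 2 := by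
    rw [hS, Finset.card_erase_of_mem h1mem, hcard]
    all_goals omega
  -- the linear forms over S
  set L : Fq → MvPolynomial (Fin 2) Fq :=
    fun ζ => MvPolynomial.X 0 + MvPolynomial.C ζ * MvPolynomial.X 1 with hL
  have hXXne : (MvPolynomial.X 0 + MvPolynomial.X 1 : MvPolynomial (Fin 2) Fq) ≠ 0 := by
    intro h
    have := congrArg (MvPolynomial.eval (fun j : Fin 2 => if j = 0 then (1 : Fq) else 0)) h
    simp at this
  have hgeom : (MvPolynomial.map (algebraMap (ZMod 2) Fq) (Tc k))
      * (MvPolynomial.X 0 + MvPolynomial.X 1)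
      = MvPolynomial.X 0 ^ n + MvPolynomial.X 1 ^ n := by
    have hg2 := geom_sum₂_mul (MvPolynomial.X 0 : MvPolynomial (Fin 2) Fq) (MvPolynomial.X 1) n
    rw [CharTwo.sub_eq_add, CharTwo.sub_eq_add] at hg2
    have hmapT : MvPolynomial.map (algebraMap (ZMod 2) Fq) (Tc k)
        = ∑ i ∈ Finset.range n, (MvPolynomial.X 0 : MvPolynomial (Fin 2) Fq) ^ i
            * MvPolynomial.X 1 ^ (n - 1 - i) := by
      rw [Tc, map_sum]
      refine Finset.sum_congr rfl fun i _ => ?_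
      rw [map_mul, map_pow, map_pow, MvPolynomial.map_X, MvPolynomial.map_X,
        show n - 1 - i = 2 ^ k - 2 - i from by omega]
    rw [hmapT]
    exact hg2
  have hprodS : L 1 * ∏ ζ ∈ S, L ζ = MvPolynomial.X 0 ^ n + MvPolynomial.X 1 ^ n := by
    rw [hS, Finset.mul_prod_erase Sall L h1mem]
    exact prod_all_linear n hnne hnF hcard
  have hmain : MvPolynomial.map (algebraMap (ZMod 2) Fq) (Tc k) = ∏ ζ ∈ S, L ζ := by
    apply mul_right_cancel₀ hXXne
    rw [hgeom, ← hprodS, hL]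
    simp only [map_one, one_mul]
    all_goals ring
  -- enumeration of S
  set e := S.equivFin with he
  set b : Fin (2 ^ k - 2) → Fq := fun i => (e.symm (Fin.cast hScard.symm i) : Fq) with hb
  have hbinj : Function.Injective b := by
    intro i j hij
    have := Subtype.val_injective hij
    have := e.symm.injective this
    exact Fin.cast_injective _ this
  have hre : ∏ i : Fin (2 ^ k - 2), L (b i) = ∏ ζ ∈ S, L ζ := by
    apply Finset.prod_bij (fun i _ => b i)
    · intro i _
      exact (e.symm (Fin.cast hScard.symm i)).2
    · intro i _ j _ hij
      exact hbinj hij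
    · intro ζ hζ
      refine ⟨Fin.cast hScard (e ⟨ζ, hζ⟩), Finset.mem_univ _, ?_⟩
      have hcast : Fin.cast hScard.symm (Fin.cast hScard (e ⟨ζ, hζ⟩)) = e ⟨ζ, hζ⟩ := by
        ext
        simp
      rw [hb]
      simp only [hcast, Equiv.symm_apply_apply]
    · intro i _
      rfl
  refine ⟨fun _ => 1, b, ?_, ?_⟩
  · rw [hmain, ← hre]
    simp only [map_one, one_mul]
    rfl
  · intro i j hij
    simp only [one_mul]
    exact fun h => hij (hbinj h.symm)

end KasamiAux

open KasamiAux in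
/-- For the Kasami–Welch number `t = 2^(2k) - 2^k + 1` (k ≥ 2), the multiplicity of
`φ_t(x,y)` at `p = (1,1)` is `2^k - 2` (the least degree of a nonzero homogeneous component of
`φ_t(x+1, y+1)`), and the corresponding lowest homogeneous component (the tangent cone) factors
over an algebraic closure of `F_2` as a product of `2^k - 2` pairwise non-proportional linear
forms.  Here `φ_t(x,y)` is the (unique) quotient of `x^t + y^t + 1 + (x+y+1)^t` by
`(x+y)(x+1)(y+1)` in `F_2[x,y]`. -/
theorem kasami_multiplicity_and_tangent_cone (k : ℕ) (hk : 2 ≤ k) (t : ℕ)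
    (ht : t = 2 ^ (2 * k) - 2 ^ k + 1)
    (phi : MvPolynomial (Fin 2) (ZMod 2))
    (hphi : phi * ((X 0 + X 1) * (X 0 + 1) * (X 1 + 1)) =
      X 0 ^ t + X 1 ^ t + 1 + (X 0 + X 1 + 1) ^ t) :
    sInf {m : ℕ | MvPolynomial.homogeneousComponent m
        (MvPolynomial.aeval (fun i : Fin 2 => (X i + 1 : MvPolynomial (Fin 2) (ZMod 2))) phi) ≠ 0} = 2 ^ k - 2 ∧
    ∃ a b : Fin (2 ^ k - 2) → AlgebraicClosure (ZMod 2),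
      MvPolynomial.map (algebraMap (ZMod 2) (AlgebraicClosure (ZMod 2)))
          (MvPolynomial.homogeneousComponent (2 ^ k - 2)
            (MvPolynomial.aeval (fun i : Fin 2 => (X i + 1 : MvPolynomial (Fin 2) (ZMod 2))) phi)) =
        ∏ i, (C (a i) * X 0 + C (b i) * X 1) ∧
      ∀ i j, i ≠ j → a i * b j ≠ a j * b i := by
  have hq4 : 4 ≤ 2 ^ k := by
    calc 4 = 2 ^ 2 := by norm_num
    _ ≤ 2 ^ k := Nat.pow_le_pow_right (by norm_num) hk
  obtain ⟨P, hψ, hOrd⟩ := key_decomp k t hk ht phi hphi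
  have hcT : ∀ m, homogeneousComponent m (Tc k) = if m = 2 ^ k - 2 then Tc k else 0 :=
    fun m => homogeneousComponent_of_mem ((mem_homogeneousSubmodule _ _).2 (Tc_hom k hk))
  have hcψ_low : ∀ m < 2 ^ k - 2, homogeneousComponent m
      (MvPolynomial.aeval (fun i : Fin 2 => (X i + 1 : MvPolynomial (Fin 2) (ZMod 2))) phi) = 0 := by
    intro m hm
    rw [hψ, map_add, hcT m, if_neg (by omega), zero_add, ord_hc_zero hOrd (by omega)]
  have hcψ_eq : homogeneousComponent (2 ^ k - 2)
      (MvPolynomial.aeval (fun i : Fin 2 => (X i + 1 : MvPolynomial (Fin 2) (ZMod 2))) phi) = Tc k := by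
    rw [hψ, map_add, hcT _, if_pos rfl, ord_hc_zero hOrd (by omega), add_zero]
  have hmem : (2 ^ k - 2) ∈ {m : ℕ | MvPolynomial.homogeneousComponent m
      (MvPolynomial.aeval (fun i : Fin 2 => (X i + 1 : MvPolynomial (Fin 2) (ZMod 2))) phi) ≠ 0} := by
    simp only [Set.mem_setOf_eq, hcψ_eq]
    exact Tc_ne k hk
  constructor
  · refine le_antisymm (Nat.sInf_le hmem) (le_csInf ⟨_, hmem⟩ fun m hm => ?_)
    by_contra h
    push_neg at h
    exact hm (hcψ_low m (by omega))
  · obtain ⟨a, b, hab, hnd⟩ := part2 k hk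
    exact ⟨a, b, by rw [hcψ_eq]; exact hab, hnd⟩
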